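/- Let r and s be vertices at distance two in a k-connected graph G on n vertices with universal vertex u, and let X be an (r,s)-cutset of size k (necessarily containing u). The configuration F that places 0 pebbles on r and on every vertex of X, 4t−1 pebbles on s, and 1 pebble on every remaining vertex has size n + 4t − k − 3 and is not t-fold r-solvable. -/

import Mathlib

open SimpleGraph

open Classical in
/-- A single pebbling step: remove two pebbles from `u` and add one to an adjacent `v`. -/
def PebStep {V : Type*} (G : SimpleGraph V) (C C' : V → ℕ) : Prop :=
  ∃ u v, G.Adj u v ∧ 2 ≤ C u ∧
    ∀ w, C' w = if w = u then C w - 2 else if w = v then C w + 1 else C w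

/-- `C` is `t`-fold `r`-solvable: some sequence of pebbling steps places `t` pebbles on `r`. -/
def Solvable {V : Type*} (G : SimpleGraph V) (C : V → ℕ) (r : V) (t : ℕ) : Prop :=
  ∃ C', Relation.ReflTransGen (PebStep G) C C' ∧ t ≤ C' r

/-- The size of a configuration: total number of pebbles. -/
def confSize {V : Type*} [Fintype V] (C : V → ℕ) : ℕ := ∑ v, C v

/-- The potential of a configuration: the number of pairwise disjoint pairs of
pebbles sitting on common vertices, `∑ v, ⌊C v / 2⌋`. -/
def potential {V : Type*} [Fintype V] (C : V → ℕ) : ℕ := ∑ v, C v / 2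

/-- Number of vertices with no pebbles. -/
noncomputable def numZeros {V : Type*} [Fintype V] (C : V → ℕ) : ℕ :=
  {v : V | C v = 0}.ncard

/-- The `t`-pebbling number of `G` with root `r`. -/
noncomputable def piT {V : Type*} [Fintype V] (G : SimpleGraph V) (r : V) (t : ℕ) : ℕ :=
  sInf {m | ∀ C : V → ℕ, m ≤ confSize C → Solvable G C r t}

/-- The `t`-pebbling number of `G`. -/
noncomputable def piTG {V : Type*} [Fintype V] (G : SimpleGraph V) (t : ℕ) : ℕ :=
  Finset.univ.sup fun r => piT G r t

/-- `G` is `k`-connected: more than `k` vertices and deleting fewer than `k`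
vertices leaves a connected graph. -/
def KConnected {V : Type*} [Fintype V] (G : SimpleGraph V) (k : ℕ) : Prop :=
  k < Fintype.card V ∧
    ∀ S : Set V, S.ncard < k → ((⊤ : G.Subgraph).deleteVerts S).coe.Connected

/-- `u` is a universal vertex: adjacent to every other vertex. -/
def IsUniversal {V : Type*} (G : SimpleGraph V) (u : V) : Prop :=
  ∀ v, v ≠ u → G.Adj u v

/-- Weighted sums f are nonincreasing along a pebbling step, provided f satisfies
the per-edge condition. -/
lemma pebStep_sum_le {V : Type*} [Fintype V] {G : SimpleGraph V} {f : V → ℕ → ℕ}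
    (hf : ∀ ⦃u v : V⦄, G.Adj u v → ∀ m n : ℕ, 2 ≤ m →
      f u (m - 2) + f v (n + 1) ≤ f u m + f v n)
    {C C' : V → ℕ} (h : PebStep G C C') :
    ∑ v, f v (C' v) ≤ ∑ v, f v (C v) := by
  classical
  obtain ⟨u, v, hadj, h2, hC'⟩ := h
  have huv : u ≠ v := hadj.ne
  have hsub : ({u, v} : Finset V) ⊆ Finset.univ := Finset.subset_univ _
  have hsplit : ∀ D : V → ℕ, ∑ w, f w (D w)
      = ∑ w ∈ Finset.univ \ {u, v}, f w (D w) + (f u (D u) + f v (D v)) := by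
    intro D
    rw [← Finset.sum_sdiff hsub]
    congr 1
    rw [Finset.sum_insert (by simp [huv]), Finset.sum_singleton]
  rw [hsplit C, hsplit C']
  have hrest : ∑ w ∈ Finset.univ \ ({u, v} : Finset V), f w (C' w)
      = ∑ w ∈ Finset.univ \ ({u, v} : Finset V), f w (C w) := by
    apply Finset.sum_congr rfl
    intro w hw
    simp only [Finset.mem_sdiff, Finset.mem_insert, Finset.mem_singleton] at hw
    rw [hC' w, if_neg (by tauto), if_neg (by tauto)]
  rw [hrest]
  have hu' : C' u = C u - 2 := by rw [hC' u]; simp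
  have hv' : C' v = C v + 1 := by rw [hC' v]; simp [huv.symm]
  rw [hu', hv']
  exact Nat.add_le_add_left (hf hadj (C u) (C v) h2) _

lemma pebSteps_sum_le {V : Type*} [Fintype V] {G : SimpleGraph V} {f : V → ℕ → ℕ}
    (hf : ∀ ⦃u v : V⦄, G.Adj u v → ∀ m n : ℕ, 2 ≤ m →
      f u (m - 2) + f v (n + 1) ≤ f u m + f v n)
    {C C' : V → ℕ} (h : Relation.ReflTransGen (PebStep G) C C') :
    ∑ v, f v (C' v) ≤ ∑ v, f v (C v) := by
  induction h with
  | refl => exact le_refl _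
  | tail _ hstep ih => exact le_trans (pebStep_sum_le hf hstep) ih

open Classical in
theorem cutset_config_unsolvable {V : Type*} [Fintype V] (G : SimpleGraph V) (k : ℕ)
    (hG : KConnected G k) (u : V) (hu : _root_.IsUniversal G u) (r s : V)
    (hdist : G.dist r s = 2) (X : Finset V) (hX : X.card = k)
    (hrX : r ∉ X) (hsX : s ∉ X)
    (hcut : ¬ (G.induce ((↑X : Set V)ᶜ)).Reachable ⟨r, hrX⟩ ⟨s, hsX⟩)
    (t : ℕ) (ht : 1 ≤ t) :
    u ∈ X ∧
    confSize (fun v => if v = s then 4 * t - 1 else if v = r ∨ v ∈ X then 0 else 1)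
      = Fintype.card V + 4 * t - k - 3 ∧
    ¬ Solvable G (fun v => if v = s then 4 * t - 1 else if v = r ∨ v ∈ X then 0 else 1) r t := by
  have hrs : r ≠ s := by
    intro h; subst h; simp [SimpleGraph.dist_self] at hdist
  -- u ∈ X
  have huX : u ∈ X := by
    by_contra huX
    have hur : u ≠ r := by
      rintro rfl
      have hadj : G.Adj u s := hu s (Ne.symm hrs)
      have := SimpleGraph.dist_le hadj.toWalk
      simp at this; omega
    have hus : u ≠ s := by
      rintro rfl
      have hadj : G.Adj u r := hu r hrs
      have := SimpleGraph.dist_le hadj.symm.toWalk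
      simp at this; omega
    apply hcut
    have h1 : (G.induce ((↑X : Set V)ᶜ)).Adj ⟨r, hrX⟩ ⟨u, huX⟩ :=
      (hu r (Ne.symm hur)).symm
    have h2 : (G.induce ((↑X : Set V)ᶜ)).Adj ⟨u, huX⟩ ⟨s, hsX⟩ :=
      hu s (Ne.symm hus)
    exact h1.reachable.trans h2.reachable
  -- the component of r in G - X
  set A : V → Prop := fun v => ∃ h : v ∈ ((↑X : Set V)ᶜ),
      (G.induce ((↑X : Set V)ᶜ)).Reachable ⟨r, hrX⟩ ⟨v, h⟩ with hAdef
  have hAr : A r := ⟨hrX, SimpleGraph.Reachable.refl _⟩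
  have hextend : ∀ a b : V, A a → G.Adj a b → b ∉ X → A b := by
    rintro a b ⟨ha, hreach⟩ hab hbX
    refine ⟨hbX, hreach.trans (SimpleGraph.Adj.reachable ?_)⟩
    exact hab
  have hAs : ¬ A s := by
    rintro ⟨h, hreach⟩
    exact hcut hreach
  -- the weight function
  set f : V → ℕ → ℕ := fun v n =>
    if v ∈ X then 2 * n else if v = r then 4 * n
    else if A v then 4 * (n / 2) else 2 * (n / 2) with hfdef
  have hf : ∀ ⦃a b : V⦄, G.Adj a b → ∀ m n : ℕ, 2 ≤ m →
      f a (m - 2) + f b (n + 1) ≤ f a m + f b n := by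
    intro a b hadj m n hm
    by_cases haX : a ∈ X
    · by_cases hbX : b ∈ X
      · simp only [hfdef, if_true, if_pos haX, if_pos hbX]; omega
      · by_cases hbr : b = r
        · simp only [hfdef, if_true, if_pos haX, if_neg hbX, if_pos hbr]; omega
        · by_cases hbA : A b
          · simp only [hfdef, if_true, if_pos haX, if_neg hbX, if_neg hbr, if_pos hbA]; omega
          · simp only [hfdef, if_true, if_pos haX, if_neg hbX, if_neg hbr, if_neg hbA]; omega
    · by_cases har : a = r
      · subst har
        by_cases hbX : b ∈ X
        · simp only [hfdef, if_true, if_neg haX, if_pos rfl, if_pos hbX]; omega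
        · have hbA : A b := hextend a b hAr hadj hbX
          have hbr : b ≠ a := hadj.ne.symm
          simp only [hfdef, if_true, if_neg haX, if_pos rfl, if_neg hbX, if_neg hbr, if_pos hbA]; omega
      · by_cases haA : A a
        · by_cases hbX : b ∈ X
          · simp only [hfdef, if_true, if_neg haX, if_neg har, if_pos haA, if_pos hbX]; omega
          · by_cases hbr : b = r
            · simp only [hfdef, if_true, if_neg haX, if_neg har, if_pos haA, if_neg hbX, if_pos hbr]
              omega
            · by_cases hbA : A b
              · simp only [hfdef, if_true, if_neg haX, if_neg har, if_pos haA, if_neg hbX, if_neg hbr,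
                  if_pos hbA]; omega
              · simp only [hfdef, if_true, if_neg haX, if_neg har, if_pos haA, if_neg hbX, if_neg hbr,
                  if_neg hbA]; omega
        · -- a is in B : all neighbors of a outside X are in B
          by_cases hbX : b ∈ X
          · simp only [hfdef, if_true, if_neg haX, if_neg har, if_neg haA, if_pos hbX]; omega
          · have hbr : b ≠ r := by
              rintro rfl
              exact haA (hextend b a hAr hadj.symm haX)
            have hbA : ¬ A b := by
              intro hbA
              exact haA (hextend b a hbA hadj.symm haX)
            simp only [hfdef, if_true, if_neg haX, if_neg har, if_neg haA, if_neg hbX, if_neg hbr,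
              if_neg hbA]; omega
  set F : V → ℕ := fun v => if v = s then 4 * t - 1 else if v = r ∨ v ∈ X then 0 else 1 with hFdef
  -- cardinality facts
  set T : Finset V := insert s (insert r X) with hTdef
  have hTcard : T.card = k + 2 := by
    rw [hTdef, Finset.card_insert_of_notMem (by simp [Ne.symm hrs, hsX]),
      Finset.card_insert_of_notMem hrX, hX]
  have hcardV : k + 2 ≤ Fintype.card V := by
    rw [← hTcard]
    exact Finset.card_le_univ T
  refine ⟨huX, ?_, ?_⟩
  · -- size computation
    have hpt : ∀ v, F v + (if v ∈ T then 1 else 0) = (if v = s then 4 * t - 1 else 0) + 1 := by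
      intro v
      by_cases hvs : v = s
      · subst hvs
        simp [hFdef, hTdef]
      · by_cases hvr : v = r ∨ v ∈ X
        · have hvT : v ∈ T := by
            rcases hvr with h | h <;> simp [hTdef, h]
          simp [hFdef, hvs, hvr, hvT]
        · have hvT : v ∉ T := by
            simp only [hTdef, Finset.mem_insert]
            push_neg at hvr ⊢
            exact ⟨hvs, hvr.1, hvr.2⟩
          simp [hFdef, hvs, hvr, hvT]
    have hsum : (∑ v, F v) + (∑ v, if v ∈ T then 1 else 0)
        = (∑ v, if v = s then 4 * t - 1 else 0) + ∑ v : V, 1 := by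
      rw [← Finset.sum_add_distrib, ← Finset.sum_add_distrib]
      exact Finset.sum_congr rfl fun v _ => hpt v
    have h1 : (∑ v, if v ∈ T then (1 : ℕ) else 0) = T.card := by
      simp [Finset.sum_ite_mem]
    have h2 : (∑ v, if v = s then 4 * t - 1 else 0) = 4 * t - 1 := by
      simp
    have h3 : (∑ v : V, (1 : ℕ)) = Fintype.card V := by simp
    rw [h1, h2, h3, hTcard] at hsum
    show (∑ v, F v) = Fintype.card V + 4 * t - k - 3
    omega
  · -- unsolvability
    rintro ⟨C', hsteps, hCr⟩
    have hmono : ∑ v, f v (C' v) ≤ ∑ v, f v (F v) := pebSteps_sum_le hf hsteps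
    have hinit : ∑ v, f v (F v) = 4 * t - 2 := by
      have hpt : ∀ v, f v (F v) = if v = s then 4 * t - 2 else 0 := by
        intro v
        by_cases hvs : v = s
        · subst hvs
          have : F v = 4 * t - 1 := by simp [hFdef]
          rw [this]
          simp only [hfdef, if_true, if_neg hsX, if_neg (Ne.symm hrs : v ≠ r), if_neg hAs, if_pos rfl]
          omega
        · by_cases hvX : v ∈ X
          · have : F v = 0 := by simp [hFdef, hvs, hvX]
            rw [this]
            simp [hfdef, hvX, hvs]
          · by_cases hvr : v = r
            · have : F v = 0 := by simp [hFdef, hvs, hvr, hrs]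
              rw [this]
              simp [hfdef, hvX, hvr, hvs, hrs]
            · have : F v = 1 := by simp [hFdef, hvs, hvr, hvX]
              rw [this]
              by_cases hvA : A v <;>
                simp [hfdef, hvX, hvr, hvs, hvA]
      calc ∑ v, f v (F v) = ∑ v, if v = s then 4 * t - 2 else 0 :=
            Finset.sum_congr rfl fun v _ => hpt v
        _ = 4 * t - 2 := by simp
    have hfinal : 4 * t ≤ ∑ v, f v (C' v) := by
      have h1 : f r (C' r) ≤ ∑ v, f v (C' v) :=
        Finset.single_le_sum (f := fun v => f v (C' v)) (fun i _ => Nat.zero_le _)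
          (Finset.mem_univ r)
      have h2 : f r (C' r) = 4 * C' r := by
        simp [hfdef, hrX]
      omega
    omega
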